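/- Int_ℚ(A_n, 𝒜_n) = Int_ℚ(𝒜_n): a polynomial f ∈ ℚ[X] satisfies f(α) integral over ℤ for every algebraic integer α of degree at most n if and only if f(α) is integral over ℤ for every algebraic integer α of degree exactly n. In particular, if f ∈ ℚ[X] maps every algebraic integer of degree exactly n to an algebraic integer, then it also maps every algebraic integer of degree smaller than n to an algebraic integer. -/

import Mathlib

set_option maxHeartbeats 1000000
set_option synthInstance.maxHeartbeats 100000

open Polynomial

noncomputable section

namespace Stmt1Aux

lemma aeval_int_integral {K : Type*} [CommRing K] {x : K} (hx : IsIntegral ℤ x)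
    (p : ℤ[X]) : IsIntegral ℤ (Polynomial.aeval x p) :=
  adjoin_le_integralClosure hx (Polynomial.aeval_mem_adjoin_singleton ℤ x)

/-- Construction of a monic irreducible polynomial of degree `n` congruent to
`μ * X ^ (n - μ.natDegree)` modulo `M`. -/
lemma exists_G (n : ℕ) (hn : 0 < n) (μ : ℤ[X]) (hμ : μ.Monic) (hm : μ.natDegree ≤ n)
    (M : ℤ) (hM : M ≠ 0) :
    ∃ G : ℤ[X], G.Monic ∧ G.natDegree = n ∧ Irreducible (G.map (algebraMap ℤ ℚ)) ∧
      C M ∣ G - μ * X ^ (n - μ.natDegree) := by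
  classical
  set m := μ.natDegree with hmdef
  set P : ℤ[X] := μ * X ^ (n - m) with hPdef
  have hPmonic : P.Monic := hμ.mul (monic_X_pow _)
  have hPdeg : P.natDegree = n := by
    rw [hPdef, hμ.natDegree_mul (monic_X_pow _), natDegree_X_pow]; omega
  obtain ⟨l, hlge, hlp⟩ := Nat.exists_infinite_primes (M.natAbs + 1)
  have hlprime : Prime (l : ℤ) := by
    rw [Int.prime_iff_natAbs_prime]; simpa using hlp
  have hl0 : (l : ℤ) ≠ 0 := hlprime.ne_zero
  have hlM : ¬ (l : ℤ) ∣ M := by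
    intro hdvd
    have h1 : (l : ℤ) ∣ (M.natAbs : ℤ) := Int.dvd_natAbs.mpr hdvd
    have h2 : l ∣ M.natAbs := Int.ofNat_dvd.mp h1
    have := Nat.le_of_dvd (Int.natAbs_pos.mpr hM) h2
    omega
  have hcop : IsCoprime ((l : ℤ) ^ 2) M :=
    (((hlprime.coprime_iff_not_dvd).mpr hlM).pow_left : IsCoprime ((l:ℤ)^2) M)
  obtain ⟨u, v, huv⟩ := hcop
  set c : ℕ → ℤ :=
    fun i => P.coeff i * (u * (l : ℤ) ^ 2) + (if i = 0 then (l : ℤ) * (v * M) else 0) with hc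
  set G : ℤ[X] := X ^ n + ∑ i ∈ Finset.range n, C (c i) * X ^ i with hG
  have hdegsum : (∑ i ∈ Finset.range n, C (c i) * X ^ i).degree < ((n : ℕ) : WithBot ℕ) := by
    apply lt_of_le_of_lt (degree_sum_le _ _)
    rw [Finset.sup_lt_iff (by exact_mod_cast WithBot.bot_lt_coe n)]
    intro i hi
    apply lt_of_le_of_lt (degree_C_mul_X_pow_le _ _)
    exact_mod_cast Finset.mem_range.mp hi
  have hGmonic : G.Monic := by
    rw [hG]; exact monic_X_pow_add hdegsum
  have hGdeg : G.natDegree = n := by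
    have hdeg : G.degree = n := by
      rw [hG]
      rw [degree_add_eq_left_of_degree_lt (by rwa [degree_X_pow])]
      exact degree_X_pow n
    exact natDegree_eq_of_degree_eq_some hdeg
  have hGcoeff : ∀ i < n, G.coeff i = c i := by
    intro i hi
    rw [hG, coeff_add, coeff_X_pow, if_neg (by omega), finset_sum_coeff]
    rw [Finset.sum_eq_single i]
    · simp [coeff_C_mul_X_pow]
    · intro j _ hj
      rw [coeff_C_mul_X_pow, if_neg (fun h => hj h.symm)]
    · intro h
      exact absurd (Finset.mem_range.mpr hi) h
  -- divisibility of all coefficients of G - P by M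
  have hMdvd : C M ∣ G - P := by
    rw [C_dvd_iff_dvd_coeff]
    intro i
    rcases lt_trichotomy i n with hi | rfl | hi
    · rw [coeff_sub, hGcoeff i hi, hc]
      have h1 : c i - P.coeff i
          = P.coeff i * (u * (l:ℤ)^2 - 1) + (if i = 0 then (l : ℤ) * (v * M) else 0) := by
        rw [hc]; ring
      have h2 : u * (l:ℤ)^2 - 1 = -(v * M) := by linarith [huv]
      rw [h1, h2]
      apply dvd_add
      · exact ⟨-(P.coeff i * v), by ring⟩
      · split
        · exact ⟨(l : ℤ) * v, by ring⟩
        · exact dvd_zero _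
    · rw [coeff_sub]
      have e1 : G.coeff i = 1 := by
        have := hGmonic; rw [Monic, leadingCoeff, hGdeg] at this; exact this
      have e2 : P.coeff i = 1 := by
        have := hPmonic; rw [Monic, leadingCoeff, hPdeg] at this; exact this
      rw [e1, e2, sub_self]
      exact dvd_zero _
    · rw [coeff_sub, coeff_eq_zero_of_natDegree_lt (by omega : G.natDegree < i),
        coeff_eq_zero_of_natDegree_lt (by omega : P.natDegree < i), sub_self]
      exact dvd_zero _
  -- Eisenstein at l
  have hEis : G.IsEisensteinAt (Ideal.span {(l : ℤ)}) := by
    constructor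
    · rw [hGmonic.leadingCoeff]
      intro hmem
      rw [Ideal.mem_span_singleton] at hmem
      exact hlprime.not_unit (isUnit_of_dvd_one hmem)
    · intro i hi
      rw [hGdeg] at hi
      rw [hGcoeff i hi, Ideal.mem_span_singleton, hc]
      apply dvd_add
      · exact ⟨P.coeff i * (u * l), by ring⟩
      · split
        · exact ⟨v * M, by ring⟩
        · exact dvd_zero _
    · rw [Ideal.span_singleton_pow, Ideal.mem_span_singleton]
      have h0n : 0 < n := hn
      rw [hGcoeff 0 h0n, hc]
      intro hdvd
      simp only [if_pos rfl] at hdvd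
      have h1 : (l : ℤ) ^ 2 ∣ (l : ℤ) * (v * M) := by
        have h2 : (l : ℤ) ^ 2 ∣ P.coeff 0 * (u * (l:ℤ)^2) := ⟨P.coeff 0 * u, by ring⟩
        have := dvd_sub hdvd h2
        simpa using this
      have h3 : (l : ℤ) ∣ v * M := by
        rcases h1 with ⟨k, hk⟩
        refine ⟨k, ?_⟩
        have : (l : ℤ) * (v * M) = (l : ℤ) * ((l:ℤ) * k) := by rw [hk]; ring
        exact mul_left_cancel₀ hl0 this
      have h4 : (l : ℤ) ∣ 1 := by
        rw [← huv]
        exact dvd_add ⟨u * l, by ring⟩ h3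
      exact hlprime.not_unit (isUnit_of_dvd_one h4)
  have hGirrZ : Irreducible G :=
    hEis.irreducible (Ideal.span_singleton_prime hl0 |>.mpr hlprime) hGmonic.isPrimitive
      (hGdeg ▸ hn)
  have hGirrQ : Irreducible (G.map (algebraMap ℤ ℚ)) :=
    (hGmonic.irreducible_iff_irreducible_map_fraction_map).mp hGirrZ
  exact ⟨G, hGmonic, hGdeg, hGirrQ, hMdvd⟩


lemma key (n : ℕ) (hn : 0 < n) (f : Polynomial ℚ)
    (h1 : ∀ β : AlgebraicClosure ℚ, IsIntegral ℤ β → (minpoly ℚ β).natDegree = n →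
        IsIntegral ℤ (Polynomial.aeval β f))
    (α : AlgebraicClosure ℚ) (hα : IsIntegral ℤ α)
    (hdeg : (minpoly ℚ α).natDegree ≤ n) :
    IsIntegral ℤ (Polynomial.aeval α f) := by
  classical
  -- clear denominators of f
  obtain ⟨b, hb⟩ := IsLocalization.integerNormalization_map_to_map (nonZeroDivisors ℤ) f
  set gZ : ℤ[X] := IsLocalization.integerNormalization (nonZeroDivisors ℤ) f with hgZ
  set N : ℤ := (b : ℤ) with hN
  have hN0 : N ≠ 0 := nonZeroDivisors.coe_ne_zero b
  have hNb0 : ((N : AlgebraicClosure ℚ)) ≠ 0 := by exact_mod_cast hN0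
  -- minimal polynomial over ℤ
  set μ : ℤ[X] := minpoly ℤ α with hμ
  have hμmonic : μ.Monic := minpoly.monic hα
  have hQZ : minpoly ℚ α = μ.map (algebraMap ℤ ℚ) :=
    minpoly.isIntegrallyClosed_eq_field_fractions' ℚ hα
  have hmn : μ.natDegree ≤ n := by
    rwa [hQZ, hμmonic.natDegree_map] at hdeg
  -- the auxiliary irreducible polynomial G
  obtain ⟨G, hGmonic, hGdeg, hGirrQ, hMdvd⟩ :=
    exists_G n hn μ hμmonic hmn (N ^ n) (pow_ne_zero _ hN0)
  obtain ⟨E, hE⟩ := hMdvd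
  -- roots of G in the algebraic closure
  set F : Polynomial (AlgebraicClosure ℚ) := G.map (algebraMap ℤ (AlgebraicClosure ℚ)) with hF
  have hFmonic : F.Monic := hGmonic.map _
  have hFsplits : F.Splits := IsAlgClosed.splits F
  set R : Multiset (AlgebraicClosure ℚ) := F.roots with hR
  have hcard : R.card = n := by
    rw [hR, splits_iff_card_roots.mp hFsplits, hF, hGmonic.natDegree_map, hGdeg]
  have hFprod : F = (R.map fun a => X - C a).prod :=
    hFsplits.eq_prod_roots_of_monic hFmonic
  -- each root is an algebraic integer of degree exactly n
  have hRint : ∀ β ∈ R, IsIntegral ℤ β := by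
    intro β hβ
    refine ⟨G, hGmonic, ?_⟩
    have h0 := isRoot_of_mem_roots hβ
    rw [hF, IsRoot, eval_map] at h0
    exact h0
  have hRdeg : ∀ β ∈ R, (minpoly ℚ β).natDegree = n := by
    intro β hβ
    have hroot : Polynomial.aeval β (G.map (algebraMap ℤ ℚ)) = 0 := by
      rw [aeval_map_algebraMap]
      have h0 := isRoot_of_mem_roots hβ
      rw [hF, IsRoot, eval_map] at h0
      rw [aeval_def]
      exact h0
    rw [← minpoly.eq_of_irreducible_of_monic hGirrQ hroot (hGmonic.map _),
      hGmonic.natDegree_map, hGdeg]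
  have hfR : ∀ β ∈ R, IsIntegral ℤ (Polynomial.aeval β f) := fun β hβ =>
    h1 β (hRint β hβ) (hRdeg β hβ)
  -- aeval of gZ in terms of f
  have hg : ∀ x : AlgebraicClosure ℚ,
      Polynomial.aeval x gZ = (N : AlgebraicClosure ℚ) * Polynomial.aeval x f := by
    intro x
    rw [← aeval_map_algebraMap ℚ x gZ, hb, zsmul_eq_mul, map_mul]
    congr 1
    rw [map_intCast]
  -- the difference-quotient function
  set cc : AlgebraicClosure ℚ → AlgebraicClosure ℚ := fun β =>
    if β = α then 0 else
      (Polynomial.aeval α gZ - Polynomial.aeval β gZ) * (α - β)⁻¹ with hcc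
  have hcc1 : ∀ β : AlgebraicClosure ℚ,
      Polynomial.aeval α gZ - Polynomial.aeval β gZ = (α - β) * cc β := by
    intro β
    rcases eq_or_ne β α with rfl | hne
    · simp [hcc]
    · rw [hcc]
      simp only [if_neg hne]
      have hαβ : α - β ≠ 0 := sub_ne_zero.mpr (Ne.symm hne)
      field_simp
  have hcc2 : ∀ β : AlgebraicClosure ℚ, IsIntegral ℤ β → IsIntegral ℤ (cc β) := by
    intro β hβ
    rcases eq_or_ne β α with rfl | hne
    · simp only [hcc, if_pos rfl]
      exact isIntegral_zero
    · set O := integralClosure ℤ (AlgebraicClosure ℚ) with hO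
      set a : O := ⟨α, hα⟩ with ha
      set bb : O := ⟨β, hβ⟩ with hbb
      obtain ⟨d, hd⟩ := sub_dvd_eval_sub a bb (gZ.map (algebraMap ℤ O))
      have hpush : ∀ z : O, (((gZ.map (algebraMap ℤ O)).eval z : O) : AlgebraicClosure ℚ)
          = Polynomial.aeval (z : AlgebraicClosure ℚ) gZ := by
        intro z
        rw [Polynomial.eval_map, ← Polynomial.aeval_def]
        exact (Polynomial.aeval_algHom_apply
          (integralClosure ℤ (AlgebraicClosure ℚ)).val z gZ).symm
      have hd2 : Polynomial.aeval α gZ - Polynomial.aeval β gZ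
          = (α - β) * ((d : O) : AlgebraicClosure ℚ) := by
        have h := congrArg (fun t : O => (t : AlgebraicClosure ℚ)) hd
        simp only [AddSubgroupClass.coe_sub, MulMemClass.coe_mul] at h
        rw [hpush, hpush] at h
        exact h
      have hαβ : α - β ≠ 0 := sub_ne_zero.mpr (Ne.symm hne)
      have : cc β = ((d : O) : AlgebraicClosure ℚ) := by
        apply mul_left_cancel₀ hαβ
        rw [← hcc1 β, hd2]
      rw [this]
      exact d.2
  -- the evaluation of F at α
  have hFevalα : F.eval α = (N : AlgebraicClosure ℚ) ^ n * Polynomial.aeval α E := by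
    have h0 : F.eval α = Polynomial.aeval α G := by
      rw [hF, eval_map, aeval_def]
    have h2 : G = μ * X ^ (n - μ.natDegree) + C (N ^ n) * E := by
      rw [← hE]; ring
    rw [h0, h2, map_add, map_mul, map_mul, map_pow, aeval_X]
    have h3 : Polynomial.aeval α μ = 0 := minpoly.aeval ℤ α
    rw [h3, zero_mul, zero_add, aeval_C]
    congr 1
    rw [map_pow]
    push_cast
    rfl
  have hεint : IsIntegral ℤ (Polynomial.aeval α E) := aeval_int_integral hα E
  -- products over roots
  have hprodroots : (R.map fun β => α - β).prod = F.eval α := by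
    conv_rhs => rw [hFprod]
    rw [eval_multiset_prod, Multiset.map_map]
    congr 1
    apply Multiset.map_congr rfl
    intro β _
    simp
  set A : AlgebraicClosure ℚ :=
    (R.map fun β => Polynomial.aeval α f - Polynomial.aeval β f).prod with hA
  have hL : (R.map fun β => Polynomial.aeval α gZ - Polynomial.aeval β gZ).prod
      = (N : AlgebraicClosure ℚ) ^ n * A := by
    have e1 : (R.map fun β => Polynomial.aeval α gZ - Polynomial.aeval β gZ)
        = R.map fun β => (N : AlgebraicClosure ℚ) *
            (Polynomial.aeval α f - Polynomial.aeval β f) := by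
      apply Multiset.map_congr rfl
      intro β _
      rw [hg, hg]
      ring
    rw [e1, Multiset.prod_map_mul, hA]
    congr 1
    rw [Multiset.map_const', Multiset.prod_replicate, hcard]
  have hRR : (R.map fun β => Polynomial.aeval α gZ - Polynomial.aeval β gZ).prod
      = F.eval α * (R.map cc).prod := by
    have e1 : (R.map fun β => Polynomial.aeval α gZ - Polynomial.aeval β gZ)
        = R.map fun β => (α - β) * cc β := by
      apply Multiset.map_congr rfl
      intro β _
      exact hcc1 β
    rw [e1, Multiset.prod_map_mul, hprodroots]
  have hAeq : A = Polynomial.aeval α E * (R.map cc).prod := by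
    apply mul_left_cancel₀ (pow_ne_zero n hNb0)
    rw [← hL, hRR, hFevalα]
    ring
  have hAint : IsIntegral ℤ A := by
    rw [hAeq]
    refine hεint.mul (IsIntegral.multiset_prod ?_)
    intro x hx
    obtain ⟨β, hβ, rfl⟩ := Multiset.mem_map.mp hx
    exact hcc2 β (hRint β hβ)
  -- conclude: aeval α f is a root of a monic polynomial over the integral closure
  set O := integralClosure ℤ (AlgebraicClosure ℚ) with hO
  set T : Multiset O := R.pmap (fun β h => (⟨β, h⟩ : O)) hRint with hT
  have hTmap : T.map (fun z : O => (z : AlgebraicClosure ℚ)) = R := by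
    rw [hT]
    exact (Multiset.map_pmap _ _ _ _).trans
      ((Multiset.pmap_eq_map (fun a => a ∈ O) (fun a => a) R hRint).trans (Multiset.map_id R))
  have hTcard : T.card = n := by
    rw [hT]
    exact (Multiset.card_pmap _ _ _).trans hcard
  set w : O → O := fun z =>
    if h : IsIntegral ℤ (Polynomial.aeval (z : AlgebraicClosure ℚ) f) then
      ⟨Polynomial.aeval (z : AlgebraicClosure ℚ) f, h⟩ else 0 with hw
  set q : Polynomial O := (T.map fun z => X - C (w z)).prod - C (⟨A, hAint⟩ : O) with hq
  have hprodmonic : ((T.map fun z => X - C (w z)).prod).Monic :=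
    monic_multiset_prod_of_monic _ _ (fun z _ => monic_X_sub_C (w z))
  have hproddeg : ((T.map fun z => X - C (w z)).prod).natDegree = n := by
    have : (T.map fun z => X - C (w z)) = (T.map w).map fun a => X - C a := by
      rw [Multiset.map_map]; rfl
    rw [this, natDegree_multiset_prod_X_sub_C_eq_card, Multiset.card_map, hTcard]
  have hqmonic : q.Monic := by
    rw [hq, sub_eq_add_neg, ← C_neg]
    apply hprodmonic.add_of_left
    apply lt_of_le_of_lt (degree_C_le)
    rw [degree_eq_natDegree hprodmonic.ne_zero, hproddeg]
    exact_mod_cast hn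
  have hqeval : Polynomial.aeval (Polynomial.aeval α f) q = 0 := by
    have hwz : ∀ z ∈ T, ((w z : O) : AlgebraicClosure ℚ)
        = Polynomial.aeval (z : AlgebraicClosure ℚ) f := by
      intro z hz
      rw [hT] at hz
      obtain ⟨β, hβ, rfl⟩ := Multiset.mem_pmap.mp hz
      have hint : IsIntegral ℤ
          (Polynomial.aeval (((⟨β, hRint β hβ⟩ : O) : AlgebraicClosure ℚ)) f) := hfR β hβ
      rw [hw]
      simp only [dif_pos hint]
    rw [hq, map_sub, aeval_C]
    have h1 : Polynomial.aeval (Polynomial.aeval α f) ((T.map fun z => X - C (w z)).prod)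
        = (T.map fun z =>
            Polynomial.aeval α f - ((w z : O) : AlgebraicClosure ℚ)).prod := by
      rw [map_multiset_prod, Multiset.map_map]
      congr 1
      apply Multiset.map_congr rfl
      intro z _
      simp only [Function.comp_apply, map_sub, aeval_X, aeval_C]
      rfl
    have h2 : (T.map fun z =>
        Polynomial.aeval α f - ((w z : O) : AlgebraicClosure ℚ)).prod = A := by
      rw [hA]
      congr 1
      rw [Multiset.map_congr rfl (fun z hz => by rw [hwz z hz])]
      have h3 : T.map (fun z : O =>
          Polynomial.aeval α f - Polynomial.aeval (z : AlgebraicClosure ℚ) f)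
          = (T.map (fun z : O => (z : AlgebraicClosure ℚ))).map
              (fun β => Polynomial.aeval α f - Polynomial.aeval β f) := by
        rw [Multiset.map_map]
        rfl
      rw [h3, hTmap]
    rw [h1, h2]
    have h4 : (algebraMap O (AlgebraicClosure ℚ)) (⟨A, hAint⟩ : O) = A := rfl
    rw [h4, sub_self]
  have hyO : IsIntegral O (Polynomial.aeval α f) := ⟨q, hqmonic, by
    rw [← Polynomial.aeval_def]; exact hqeval⟩
  exact isIntegral_trans (Polynomial.aeval α f) hyO

end Stmt1Aux

end

/-- `Int_ℚ(A_n, 𝒜_n) = Int_ℚ(𝒜_n)`: a polynomial `f ∈ ℚ[X]` maps every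
algebraic integer of degree at most `n` to an algebraic integer if and only if it maps every
algebraic integer of degree exactly `n` to an algebraic integer.  Algebraic integers are the
elements of a fixed algebraic closure of `ℚ` that are integral over `ℤ`, and the degree of
`α` is the degree of its minimal polynomial over `ℚ`. -/
theorem stmt_1 (n : ℕ) (hn : 0 < n) (f : Polynomial ℚ) :
    (∀ α : AlgebraicClosure ℚ, IsIntegral ℤ α → (minpoly ℚ α).natDegree = n →
        IsIntegral ℤ (Polynomial.aeval α f)) ↔
      (∀ α : AlgebraicClosure ℚ, IsIntegral ℤ α → (minpoly ℚ α).natDegree ≤ n →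
        IsIntegral ℤ (Polynomial.aeval α f)) := by
  constructor
  · intro H α hint hdeg
    exact Stmt1Aux.key n hn f H α hint hdeg
  · intro H α hint hdeg
    exact H α hint (le_of_eq hdeg)
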